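/- Let g : ℝ → ℝ be twice differentiable with |g″(x)| ≤ M for all x ∈ ℝ, let μ ∈ ℝ and σ > 0. Then the expected one-sample ES gradient estimate deviates from the true derivative by at most a quantity linear in σ: | (1/σ) ∫_ℝ g(μ + σ·ε) · ε dγ(ε) − g′(μ) | ≤ (M σ / 2) · ∫_ℝ |ε|³ dγ(ε) = M σ √(2/π), where γ is the standard Gaussian measure on ℝ. (Quantitative version of the Taylor-expansion argument in the proof of Proposition 1.) -/

import Mathlib

open MeasureTheory ProbabilityTheory Real Set
open scoped ENNReal NNReal

lemma gaussianPDFReal01 (x : ℝ) :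
    gaussianPDFReal 0 1 x = (Real.sqrt (2 * π))⁻¹ * rexp (-x ^ 2 / 2) := by
  simp [gaussianPDFReal]

lemma integral_gaussianReal01 (f : ℝ → ℝ) :
    ∫ x, f x ∂(gaussianReal 0 1) = ∫ x, gaussianPDFReal 0 1 x * f x := by
  rw [gaussianReal_of_var_ne_zero 0 one_ne_zero]
  have hpdf : gaussianPDF 0 1 = fun x => ((gaussianPDFReal 0 1 x).toNNReal : ℝ≥0∞) := rfl
  rw [hpdf, integral_withDensity_eq_integral_smul₀
    ((measurable_gaussianPDFReal 0 1).real_toNNReal.aemeasurable)]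
  congr 1
  ext x
  rw [NNReal.smul_def, smul_eq_mul, Real.coe_toNNReal _ (gaussianPDFReal_nonneg _ _ _)]

lemma integrable_gaussianReal01_iff (f : ℝ → ℝ) :
    Integrable f (gaussianReal 0 1)
      ↔ Integrable (fun x => gaussianPDFReal 0 1 x * f x) volume := by
  rw [gaussianReal_of_var_ne_zero 0 one_ne_zero]
  have hpdf : gaussianPDF 0 1 = fun x => ((gaussianPDFReal 0 1 x).toNNReal : ℝ≥0∞) := rfl
  have heq : (fun x => ((gaussianPDFReal 0 1 x).toNNReal : ℝ≥0) • f x)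
      = fun x => gaussianPDFReal 0 1 x * f x := by
    funext x
    rw [NNReal.smul_def, smul_eq_mul, Real.coe_toNNReal _ (gaussianPDFReal_nonneg _ _ _)]
  rw [hpdf, ← heq]
  exact (integrable_withDensity_iff_integrable_smul₀
    (f := fun x => (gaussianPDFReal 0 1 x).toNNReal) (g := f) (μ := volume)
    ((measurable_gaussianPDFReal 0 1).real_toNNReal.aemeasurable))

lemma integrable_pow_gauss (n : ℕ) :
    Integrable (fun x : ℝ => x ^ n * rexp (-x ^ 2 / 2)) := by
  have h := integrable_rpow_mul_exp_neg_mul_sq (b := (1:ℝ)/2) one_half_pos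
    (s := (n : ℝ)) (lt_of_lt_of_le neg_one_lt_zero (Nat.cast_nonneg n))
  have heq : (fun x : ℝ => x ^ (n : ℝ) * rexp (-(1/2) * x ^ 2))
      = fun x : ℝ => x ^ n * rexp (-x ^ 2 / 2) := by
    funext x
    rw [Real.rpow_natCast, show -(1/2 : ℝ) * x ^ 2 = -x ^ 2 / 2 by ring]
  rwa [heq] at h

lemma integrable_abs_pow_gauss (n : ℕ) :
    Integrable (fun x : ℝ => |x| ^ n * rexp (-x ^ 2 / 2)) := by
  have h := (integrable_pow_gauss n).abs
  have heq : (fun x : ℝ => |x ^ n * rexp (-x ^ 2 / 2)|)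
      = fun x : ℝ => |x| ^ n * rexp (-x ^ 2 / 2) := by
    funext x
    rw [abs_mul, abs_pow, abs_of_pos (Real.exp_pos _)]
  rwa [heq] at h

lemma integral_Ioi_pow_gauss (n : ℕ) :
    ∫ x in Ioi (0:ℝ), x ^ n * rexp (-x ^ 2 / 2)
      = ((1:ℝ)/2) ^ (-((n:ℝ) + 1)/2) * (1/2) * Real.Gamma (((n:ℝ) + 1)/2) := by
  have h := integral_rpow_mul_exp_neg_mul_rpow (p := 2) (q := (n : ℝ)) (b := (1:ℝ)/2)
    two_pos (lt_of_lt_of_le neg_one_lt_zero (Nat.cast_nonneg n)) one_half_pos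
  rw [← h]
  refine setIntegral_congr_fun measurableSet_Ioi fun x hx => ?_
  rw [Real.rpow_natCast]
  congr 1
  rw [show (2:ℝ) = ((2:ℕ):ℝ) by norm_num, Real.rpow_natCast]
  ring

lemma rpow_half_neg_three_half : ((1:ℝ)/2) ^ (-(3:ℝ)/2) = 2 * Real.sqrt 2 := by
  rw [one_div, ← Real.rpow_neg_one (2:ℝ),
    ← Real.rpow_mul (by norm_num : (0:ℝ) ≤ 2),
    show (-1:ℝ) * (-(3:ℝ)/2) = 1 + 1/2 by norm_num,
    Real.rpow_add two_pos, Real.rpow_one, ← Real.sqrt_eq_rpow]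

lemma Gamma_three_half : Real.Gamma ((3:ℝ)/2) = Real.sqrt π / 2 := by
  rw [show (3:ℝ)/2 = 1/2 + 1 by norm_num,
    Real.Gamma_add_one (by norm_num : (1/2:ℝ) ≠ 0), Real.Gamma_one_half_eq]
  ring

lemma integral_sq_gauss : ∫ x : ℝ, x ^ 2 * rexp (-x ^ 2 / 2) = Real.sqrt (2 * π) := by
  have h2 : ∫ x : ℝ, x ^ 2 * rexp (-x ^ 2 / 2)
      = 2 * ∫ x in Ioi (0:ℝ), x ^ 2 * rexp (-x ^ 2 / 2) := by
    rw [← integral_comp_abs (f := fun t => t ^ 2 * rexp (-t ^ 2 / 2))]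
    congr 1
    funext x
    rw [sq_abs]
  rw [h2, integral_Ioi_pow_gauss 2,
    show (((2:ℕ):ℝ) + 1)/2 = (3:ℝ)/2 by norm_num,
    show -(((2:ℕ):ℝ) + 1)/2 = -(3:ℝ)/2 by norm_num,
    rpow_half_neg_three_half, Gamma_three_half,
    Real.sqrt_mul (by norm_num : (0:ℝ) ≤ 2)]
  ring

lemma integral_cube_abs_gauss : ∫ x : ℝ, |x| ^ 3 * rexp (-x ^ 2 / 2) = 4 := by
  have h2 : ∫ x : ℝ, |x| ^ 3 * rexp (-x ^ 2 / 2)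
      = 2 * ∫ x in Ioi (0:ℝ), x ^ 3 * rexp (-x ^ 2 / 2) := by
    rw [← integral_comp_abs (f := fun t => t ^ 3 * rexp (-t ^ 2 / 2))]
    congr 1
    funext x
    rw [sq_abs]
  rw [h2, integral_Ioi_pow_gauss 3,
    show (((3:ℕ):ℝ) + 1)/2 = 1 + 1 by norm_num,
    show -(((3:ℕ):ℝ) + 1)/2 = ((-2:ℤ):ℝ) by norm_num,
    Real.rpow_intCast, Real.Gamma_add_one one_ne_zero, Real.Gamma_one]
  norm_num

lemma integral_id_gauss : ∫ x : ℝ, x * rexp (-x ^ 2 / 2) = 0 := by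
  have key : ∫ x : ℝ, (fun y : ℝ => y * rexp (-y ^ 2 / 2)) (-x)
      = ∫ x : ℝ, x * rexp (-x ^ 2 / 2) :=
    integral_neg_eq_self (fun y : ℝ => y * rexp (-y ^ 2 / 2)) volume
  simp only [neg_sq, neg_mul] at key
  rw [integral_neg] at key
  linarith

lemma gauss_moment1 : ∫ x, x ∂(gaussianReal 0 1) = 0 := by
  rw [integral_gaussianReal01]
  have heq : (fun x => gaussianPDFReal 0 1 x * x)
      = fun x : ℝ => (Real.sqrt (2 * π))⁻¹ * (x * rexp (-x ^ 2 / 2)) := by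
    funext x; rw [gaussianPDFReal01]; ring
  rw [heq, integral_const_mul, integral_id_gauss, mul_zero]

lemma gauss_moment2 : ∫ x, x ^ 2 ∂(gaussianReal 0 1) = 1 := by
  rw [integral_gaussianReal01]
  have heq : (fun x => gaussianPDFReal 0 1 x * x ^ 2)
      = fun x : ℝ => (Real.sqrt (2 * π))⁻¹ * (x ^ 2 * rexp (-x ^ 2 / 2)) := by
    funext x; rw [gaussianPDFReal01]; ring
  rw [heq, integral_const_mul, integral_sq_gauss]
  rw [inv_mul_cancel₀]
  positivity

lemma gauss_moment3 : ∫ x, |x| ^ 3 ∂(gaussianReal 0 1) = 4 * (Real.sqrt (2 * π))⁻¹ := by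
  rw [integral_gaussianReal01]
  have heq : (fun x => gaussianPDFReal 0 1 x * |x| ^ 3)
      = fun x : ℝ => (Real.sqrt (2 * π))⁻¹ * (|x| ^ 3 * rexp (-x ^ 2 / 2)) := by
    funext x; rw [gaussianPDFReal01]; ring
  rw [heq, integral_const_mul, integral_cube_abs_gauss]
  ring

lemma integrable_gauss_of_bound (f : ℝ → ℝ) (hf : AEStronglyMeasurable f volume)
    (C0 C1 C2 C3 : ℝ)
    (hb : ∀ x, |f x| ≤ C0 + C1 * |x| + C2 * |x| ^ 2 + C3 * |x| ^ 3) :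
    Integrable f (gaussianReal 0 1) := by
  rw [integrable_gaussianReal01_iff]
  set c : ℝ := (Real.sqrt (2 * π))⁻¹ with hc
  have hc0 : 0 ≤ c := by positivity
  have hint : Integrable (fun x : ℝ =>
      c * (C0 * (|x| ^ 0 * rexp (-x ^ 2 / 2)) + C1 * (|x| ^ 1 * rexp (-x ^ 2 / 2))
        + C2 * (|x| ^ 2 * rexp (-x ^ 2 / 2)) + C3 * (|x| ^ 3 * rexp (-x ^ 2 / 2)))) :=
    (((((integrable_abs_pow_gauss 0).const_mul C0).add
      ((integrable_abs_pow_gauss 1).const_mul C1)).add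
      ((integrable_abs_pow_gauss 2).const_mul C2)).add
      ((integrable_abs_pow_gauss 3).const_mul C3)).const_mul c
  refine hint.mono' (((measurable_gaussianPDFReal 0 1).aestronglyMeasurable).mul hf) ?_
  filter_upwards with x
  rw [Real.norm_eq_abs, abs_mul, abs_of_nonneg (gaussianPDFReal_nonneg 0 1 x),
    gaussianPDFReal01]
  have hexp : (0:ℝ) < rexp (-x ^ 2 / 2) := Real.exp_pos _
  calc c * rexp (-x ^ 2 / 2) * |f x|
      ≤ c * rexp (-x ^ 2 / 2) * (C0 + C1 * |x| + C2 * |x| ^ 2 + C3 * |x| ^ 3) := by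
        apply mul_le_mul_of_nonneg_left (hb x)
        positivity
    _ = c * (C0 * (|x| ^ 0 * rexp (-x ^ 2 / 2)) + C1 * (|x| ^ 1 * rexp (-x ^ 2 / 2))
        + C2 * (|x| ^ 2 * rexp (-x ^ 2 / 2)) + C3 * (|x| ^ 3 * rexp (-x ^ 2 / 2))) := by
        ring

lemma taylor_quad_bound {g : ℝ → ℝ} {M : ℝ}
    (hg : ∀ x : ℝ, DifferentiableAt ℝ g x)
    (hg' : ∀ x : ℝ, DifferentiableAt ℝ (deriv g) x)
    (hM : ∀ x : ℝ, |deriv (deriv g) x| ≤ M) (μ t : ℝ) :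
    |g (μ + t) - g μ - deriv g μ * t| ≤ M * t ^ 2 / 2 := by
  have hM0 : 0 ≤ M := (abs_nonneg _).trans (hM 0)
  have hlip : ∀ a b : ℝ, |deriv g a - deriv g b| ≤ M * |a - b| := by
    intro a b
    have h := Convex.norm_image_sub_le_of_norm_deriv_le (f := deriv g) (s := Set.univ)
      (fun x _ => hg' x) (fun x _ => by simpa using hM x) convex_univ
      (Set.mem_univ b) (Set.mem_univ a)
    simpa [Real.norm_eq_abs] using h
  have hcont' : Continuous (deriv g) := Differentiable.continuous (fun x => hg' x)
  have hcontI : Continuous fun s : ℝ => deriv g (μ + s) - deriv g μ :=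
    (hcont'.comp (continuous_const.add continuous_id)).sub continuous_const
  set φ : ℝ → ℝ := fun s => g (μ + s) - (g μ + deriv g μ * s) with hφ
  have hder : ∀ s : ℝ, HasDerivAt φ (deriv g (μ + s) - deriv g μ) s := by
    intro s
    have h1 : HasDerivAt (fun s : ℝ => g (μ + s)) (deriv g (μ + s)) s := by
      have := ((hg (μ + s)).hasDerivAt).comp s ((hasDerivAt_id s).const_add μ)
      simp only [mul_one] at this; exact this
    have h2 : HasDerivAt (fun s : ℝ => g μ + deriv g μ * s) (deriv g μ) s := by
      simpa using ((hasDerivAt_id s).const_mul (deriv g μ)).const_add (g μ)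
    exact h1.sub h2
  have hFTC : ∫ s in (0:ℝ)..t, (deriv g (μ + s) - deriv g μ) = φ t - φ 0 :=
    intervalIntegral.integral_eq_sub_of_hasDerivAt (fun x _ => hder x)
      (hcontI.intervalIntegrable 0 t)
  have hφ0 : φ 0 = 0 := by simp [hφ]
  have hnorm : ∀ s : ℝ, ‖deriv g (μ + s) - deriv g μ‖ ≤ M * |s| := by
    intro s
    have := hlip (μ + s) μ
    simpa [Real.norm_eq_abs] using this
  have hbd : ‖∫ s in (0:ℝ)..t, (deriv g (μ + s) - deriv g μ)‖
      ≤ abs (∫ s in (0:ℝ)..t, M * |s|) :=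
    intervalIntegral.norm_integral_le_abs_of_norm_le (ae_of_all _ fun s => hnorm s)
      ((continuous_const.mul continuous_abs).intervalIntegrable 0 t)
  have hval : ∫ s in (0:ℝ)..t, M * |s| = M * (t * |t|) / 2 := by
    rcases le_total 0 t with h | h
    · have hcg : Set.EqOn (fun s : ℝ => M * |s|) (fun s : ℝ => M * s) (Set.uIcc 0 t) := by
        intro s hs
        rw [Set.uIcc_of_le h] at hs
        simp only
        rw [abs_of_nonneg hs.1]
      rw [intervalIntegral.integral_congr hcg, intervalIntegral.integral_const_mul,
        integral_id, abs_of_nonneg h]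
      ring
    · have hcg : Set.EqOn (fun s : ℝ => M * |s|) (fun s : ℝ => -M * s) (Set.uIcc 0 t) := by
        intro s hs
        rw [Set.uIcc_of_ge h] at hs
        simp only
        rw [abs_of_nonpos hs.2]
        ring
      rw [intervalIntegral.integral_congr hcg, intervalIntegral.integral_const_mul,
        integral_id, abs_of_nonpos h]
      ring
  have habs : |M * (t * |t|) / 2| = M * t ^ 2 / 2 := by
    rw [abs_div, abs_mul, abs_mul, abs_abs, abs_of_nonneg hM0, abs_mul_abs_self]
    norm_num
    ring_nf; simp
  have : |φ t| ≤ M * t ^ 2 / 2 := by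
    have := hbd
    rw [hFTC, hφ0, sub_zero, hval, habs, Real.norm_eq_abs] at this
    exact this
  simpa [hφ, sub_sub] using this

/-- Quantitative Taylor-expansion bound in the proof of Proposition 1: if `g : ℝ → ℝ` is
twice differentiable with `|g″| ≤ M` everywhere, `μ ∈ ℝ` and `σ > 0`, then the expected
one-sample ES gradient estimate deviates from `g′(μ)` by at most
`(Mσ/2) ∫ |ε|³ dγ(ε) = Mσ√(2/π)`, where `γ` is the standard Gaussian measure on `ℝ`. -/
theorem es_gradient_estimate_bias_bound (g : ℝ → ℝ) (μ σ : ℝ) (hσ : 0 < σ)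
    (hg : ∀ x : ℝ, DifferentiableAt ℝ g x)
    (hg' : ∀ x : ℝ, DifferentiableAt ℝ (deriv g) x)
    (M : ℝ) (hM : ∀ x : ℝ, |deriv (deriv g) x| ≤ M) :
    |(1 / σ) * (∫ ε : ℝ, g (μ + σ * ε) * ε ∂(gaussianReal 0 1)) - deriv g μ|
        ≤ (M * σ / 2) * ∫ ε : ℝ, |ε| ^ 3 ∂(gaussianReal 0 1)
      ∧ (M * σ / 2) * (∫ ε : ℝ, |ε| ^ 3 ∂(gaussianReal 0 1))
        = M * σ * Real.sqrt (2 / Real.pi) := by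
  have hM0 : 0 ≤ M := (abs_nonneg _).trans (hM 0)
  have Cg : Continuous g := Differentiable.continuous (fun x => hg x)
  have taylor := fun t => taylor_quad_bound hg hg' hM μ t
  set γ := gaussianReal 0 1 with hγ
  have int_id : Integrable (fun x : ℝ => x) γ :=
    integrable_gauss_of_bound _ aestronglyMeasurable_id 0 1 0 0 (fun x => by simp)
  have int_sq : Integrable (fun x : ℝ => x ^ 2) γ :=
    integrable_gauss_of_bound _ (continuous_pow 2).aestronglyMeasurable 0 0 1 0
      (fun x => by simp [abs_pow])
  have int_cube : Integrable (fun x : ℝ => |x| ^ 3) γ :=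
    integrable_gauss_of_bound _ (continuous_abs.pow 3).aestronglyMeasurable 0 0 0 1
      (fun x => by simp [abs_pow, abs_abs])
  have hgb : ∀ x : ℝ, |g (μ + σ * x)|
      ≤ |g μ| + |deriv g μ| * σ * |x| + M * σ ^ 2 / 2 * |x| ^ 2 := by
    intro x
    have h1 := taylor (σ * x)
    have h2 : |g (μ + σ * x)| - |g μ + deriv g μ * (σ * x)|
        ≤ |g (μ + σ * x) - (g μ + deriv g μ * (σ * x))| := abs_sub_abs_le_abs_sub _ _
    have h3 : |g μ + deriv g μ * (σ * x)| ≤ |g μ| + |deriv g μ| * σ * |x| := by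
      calc |g μ + deriv g μ * (σ * x)| ≤ |g μ| + |deriv g μ * (σ * x)| := abs_add_le _ _
        _ = |g μ| + |deriv g μ| * σ * |x| := by
            rw [abs_mul, abs_mul, abs_of_pos hσ]; ring
    have h4 : M * (σ * x) ^ 2 / 2 = M * σ ^ 2 / 2 * |x| ^ 2 := by
      rw [mul_pow, ← sq_abs x]; ring
    have h5 : g (μ + σ * x) - (g μ + deriv g μ * (σ * x))
        = g (μ + σ * x) - g μ - deriv g μ * (σ * x) := by ring
    rw [h5] at h2
    linarith [h1, h4 ▸ h1]
  have int_f1 : Integrable (fun x : ℝ => g (μ + σ * x) * x) γ := by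
    refine integrable_gauss_of_bound _ ?_ 0 |g μ| (|deriv g μ| * σ) (M * σ ^ 2 / 2) ?_
    · exact ((Cg.comp (continuous_const.add (continuous_const.mul continuous_id))).mul
        continuous_id).aestronglyMeasurable
    · intro x
      rw [abs_mul]
      calc |g (μ + σ * x)| * |x|
          ≤ (|g μ| + |deriv g μ| * σ * |x| + M * σ ^ 2 / 2 * |x| ^ 2) * |x| :=
            mul_le_mul_of_nonneg_right (hgb x) (abs_nonneg x)
        _ ≤ 0 + |g μ| * |x| + |deriv g μ| * σ * |x| ^ 2 + M * σ ^ 2 / 2 * |x| ^ 3 := by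
            ring_nf; rfl
  set R : ℝ → ℝ := fun x => g (μ + σ * x) - g μ - deriv g μ * (σ * x) with hRdef
  have hRbound : ∀ x : ℝ, |R x * x| ≤ M * σ ^ 2 / 2 * |x| ^ 3 := by
    intro x
    rw [abs_mul]
    have h1 := taylor (σ * x)
    have h2 : M * (σ * x) ^ 2 / 2 = M * σ ^ 2 / 2 * |x| ^ 2 := by
      rw [mul_pow, ← sq_abs x]; ring
    calc |R x| * |x| ≤ (M * σ ^ 2 / 2 * |x| ^ 2) * |x| := by
          refine mul_le_mul_of_nonneg_right ?_ (abs_nonneg x)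
          rw [← h2]; exact h1
      _ = M * σ ^ 2 / 2 * |x| ^ 3 := by ring
  have intid' : Integrable (fun x : ℝ => g μ * x) γ := int_id.const_mul _
  have intsq' : Integrable (fun x : ℝ => (deriv g μ * σ) * x ^ 2) γ := int_sq.const_mul _
  have intR : Integrable (fun x : ℝ => R x * x) γ := by
    have h : (fun x : ℝ => R x * x)
        = fun x : ℝ => g (μ + σ * x) * x - g μ * x - (deriv g μ * σ) * x ^ 2 := by
      funext x; simp only [hRdef]; ring
    rw [h]; exact (int_f1.sub intid').sub intsq'
  have hsplit : ∫ x, g (μ + σ * x) * x ∂γ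
      = g μ * ∫ x, x ∂γ + (deriv g μ * σ) * ∫ x, x ^ 2 ∂γ + ∫ x, R x * x ∂γ := by
    have h : (fun x : ℝ => g (μ + σ * x) * x)
        = fun x : ℝ => (g μ * x + (deriv g μ * σ) * x ^ 2) + R x * x := by
      funext x; simp only [hRdef]; ring
    have hadd : Integrable (fun x : ℝ => g μ * x + (deriv g μ * σ) * x ^ 2) γ :=
      intid'.add intsq'
    rw [h, integral_add hadd intR, integral_add intid' intsq',
      integral_const_mul, integral_const_mul]
  have hE : ∫ x, g (μ + σ * x) * x ∂γ = deriv g μ * σ + ∫ x, R x * x ∂γ := by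
    rw [hsplit, hγ, gauss_moment1, gauss_moment2]; ring
  have intRabs : Integrable (fun x : ℝ => |R x| * |x|) γ := by
    have h := intR.abs
    have heq : (fun x : ℝ => |R x * x|) = fun x : ℝ => |R x| * |x| := by
      funext x; rw [abs_mul]
    rwa [heq] at h
  have habsint : |∫ x, R x * x ∂γ| ≤ M * σ ^ 2 / 2 * ∫ x, |x| ^ 3 ∂γ := by
    calc |∫ x, R x * x ∂γ| ≤ ∫ x, |R x| * |x| ∂γ := by
          simpa [Real.norm_eq_abs, abs_mul] using
            norm_integral_le_integral_norm (fun x => R x * x) (μ := γ)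
      _ ≤ ∫ x, M * σ ^ 2 / 2 * |x| ^ 3 ∂γ :=
          integral_mono intRabs (int_cube.const_mul _)
            (fun x => by have := hRbound x; rwa [abs_mul] at this)
      _ = M * σ ^ 2 / 2 * ∫ x, |x| ^ 3 ∂γ := integral_const_mul _ _
  constructor
  · have heq : (1 / σ) * (∫ x, g (μ + σ * x) * x ∂γ) - deriv g μ
        = (1 / σ) * ∫ x, R x * x ∂γ := by
      rw [hE]; field_simp; ring
    rw [heq, abs_mul, abs_of_pos (by positivity : (0:ℝ) < 1 / σ)]
    calc (1 / σ) * |∫ x, R x * x ∂γ|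
        ≤ (1 / σ) * (M * σ ^ 2 / 2 * ∫ x, |x| ^ 3 ∂γ) :=
          mul_le_mul_of_nonneg_left habsint (by positivity)
      _ = (M * σ / 2) * ∫ x, |x| ^ 3 ∂γ := by
          field_simp
  · rw [hγ, gauss_moment3]
    have h2 : Real.sqrt (2 * π) = Real.sqrt 2 * Real.sqrt π :=
      Real.sqrt_mul (by norm_num) π
    have h1 : Real.sqrt (2 / π) = Real.sqrt 2 / Real.sqrt π :=
      Real.sqrt_div (by norm_num) π
    have hs2 : Real.sqrt 2 * Real.sqrt 2 = 2 := Real.mul_self_sqrt (by norm_num)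
    have hπ : (0:ℝ) < Real.sqrt π := Real.sqrt_pos.mpr Real.pi_pos
    have hs2' : (0:ℝ) < Real.sqrt 2 := Real.sqrt_pos.mpr (by norm_num)
    rw [h1, h2]
    field_simp
    have hs2sq : Real.sqrt 2 ^ 2 = 2 := by rw [sq]; exact hs2
    linear_combination (-2 : ℝ) * M * hs2sq
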